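/- The automorphism group of the split-octonions acts transitively on the spherization of the null cone: for any nonzero x, y ∈ ℍ × ℍ with Re (x.1) = 0, x ⊛ x = 0, Re (y.1) = 0, y ⊛ y = 0, there exist a bijective ℝ-linear map φ : ℍ × ℍ → ℍ × ℍ satisfying φ(u ⊛ v) = φ(u) ⊛ φ(v) for all u, v, and a real number λ > 0, such that φ(x) = λ • y. -/

import Mathlib

open Quaternion

noncomputable section

/-- The split-octonion product on `ℍ × ℍ`: `(a,b) ⊛ (c,d) = (a*c + d*conj b, conj a * d + c*b)`. -/
def omul (x y : ℍ[ℝ] × ℍ[ℝ]) : ℍ[ℝ] × ℍ[ℝ] :=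
  (x.1 * y.1 + y.2 * star x.2, star x.1 * y.2 + y.1 * x.2)

namespace OctAux

def T (q r : ℍ[ℝ]) : (ℍ[ℝ] × ℍ[ℝ]) →ₗ[ℝ] (ℍ[ℝ] × ℍ[ℝ]) where
  toFun x := (q * x.1 * star q, q * x.2 * star r)
  map_add' x y := by simp [mul_add, add_mul]
  map_smul' c x := by simp [Algebra.mul_smul_comm, Algebra.smul_mul_assoc]

lemma T_apply (q r : ℍ[ℝ]) (x : ℍ[ℝ] × ℍ[ℝ]) :
    T q r x = (q * x.1 * star q, q * x.2 * star r) := rfl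

lemma T_mul {q r : ℍ[ℝ]} (hq : normSq q = 1) (hr : normSq r = 1)
    (u v : ℍ[ℝ] × ℍ[ℝ]) : T q r (omul u v) = omul (T q r u) (T q r v) := by
  have hq1 : star q * q = 1 := by rw [star_mul_self, hq]; norm_num
  have hr1 : star r * r = 1 := by rw [star_mul_self, hr]; norm_num
  have hq2 : ∀ z : ℍ[ℝ], star q * (q * z) = z := fun z => by
    rw [← mul_assoc, hq1, one_mul]
  have hr2 : ∀ z : ℍ[ℝ], star r * (r * z) = z := fun z => by
    rw [← mul_assoc, hr1, one_mul]
  simp only [T_apply, omul, Prod.mk.injEq]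
  constructor <;>
    simp only [mul_add, add_mul, star_mul, star_star, mul_assoc, hq2, hr2]

lemma T_left_inv {q r : ℍ[ℝ]} (hq : normSq q = 1) (hr : normSq r = 1) :
    Function.LeftInverse (T (star q) (star r)) (T q r) := by
  have hq1 : star q * q = 1 := by rw [star_mul_self, hq]; norm_num
  have hr1 : star r * r = 1 := by rw [star_mul_self, hr]; norm_num
  have hq2 : ∀ z : ℍ[ℝ], star q * (q * z) = z := fun z => by
    rw [← mul_assoc, hq1, one_mul]
  intro x
  simp only [T_apply, star_star]
  ext <;> simp only [mul_assoc, hq2, hq1, hr1, mul_one]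

lemma T_right_inv {q r : ℍ[ℝ]} (hq : normSq q = 1) (hr : normSq r = 1) :
    Function.RightInverse (T (star q) (star r)) (T q r) := by
  have hq1 : q * star q = 1 := by rw [self_mul_star, hq]; norm_num
  have hr1 : r * star r = 1 := by rw [self_mul_star, hr]; norm_num
  have hq2 : ∀ z : ℍ[ℝ], q * (star q * z) = z := fun z => by
    rw [← mul_assoc, hq1, one_mul]
  intro x
  simp only [T_apply, star_star]
  ext <;> simp only [mul_assoc, hq2, hq1, hr1, mul_one]

lemma T_bij {q r : ℍ[ℝ]} (hq : normSq q = 1) (hr : normSq r = 1) :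
    Function.Bijective (T q r) :=
  ⟨(T_left_inv hq hr).injective, (T_right_inv hq hr).surjective⟩

def qi : ℍ[ℝ] := ⟨0,1,0,0⟩

lemma star_eq_neg' {a : ℍ[ℝ]} (h : a.re = 0) : star a = -a := by
  ext <;> simp [h]

lemma qi_mul_qi : qi * qi = -1 := by
  ext <;> simp only [Quaternion.re_mul, Quaternion.imI_mul, Quaternion.imJ_mul,
    Quaternion.imK_mul] <;> simp [qi]

lemma null_normSq {x : ℍ[ℝ] × ℍ[ℝ]} (hre : x.1.re = 0) (hxx : omul x x = 0) :
    normSq x.1 = normSq x.2 := by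
  have h1 : x.1 * x.1 + x.2 * star x.2 = 0 := congrArg Prod.fst hxx
  have h : x.1 * star x.1 = ((normSq x.1 : ℝ) : ℍ[ℝ]) := self_mul_star x.1
  rw [star_eq_neg' hre, mul_neg] at h
  have h2 : x.1 * x.1 = -((normSq x.1 : ℝ) : ℍ[ℝ]) := by rw [← h, neg_neg]
  rw [self_mul_star, h2] at h1
  have h3 : ((normSq x.1 : ℝ) : ℍ[ℝ]) = ((normSq x.2 : ℝ) : ℍ[ℝ]) :=
    neg_add_eq_zero.mp h1
  exact Quaternion.coe_injective h3

lemma mul_self_of_im {u : ℍ[ℝ]} (hre : u.re = 0) (hn : normSq u = 1) :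
    u * u = -1 := by
  have h : u * star u = ((normSq u : ℝ) : ℍ[ℝ]) := self_mul_star u
  rw [star_eq_neg' hre, mul_neg, hn] at h
  have h1 : -(u * u) = (1 : ℍ[ℝ]) := by rw [h]; norm_num
  exact neg_eq_iff_eq_neg.mp h1

lemma exists_s {u : ℍ[ℝ]} (hre : u.re = 0) (hn : normSq u = 1) :
    ∃ s : ℍ[ℝ], s ≠ 0 ∧ s * u = qi * s := by
  have huu : u * u = -1 := mul_self_of_im hre hn
  by_cases hui : u = -qi
  · refine ⟨⟨0,0,1,0⟩, ?_, ?_⟩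
    · intro h
      have : ((⟨0,0,1,0⟩ : ℍ[ℝ])).imJ = (0 : ℍ[ℝ]).imJ := by rw [h]
      simpa using this
    · subst hui
      have e : ∀ w : ℍ[ℝ], w = ⟨0,0,1,0⟩ → w * -qi = qi * w := by
        intro w hw
        ext <;> simp only [Quaternion.re_mul, Quaternion.imI_mul, Quaternion.imJ_mul,
          Quaternion.imK_mul, Quaternion.re_neg, Quaternion.imI_neg, Quaternion.imJ_neg,
          Quaternion.imK_neg] <;> subst hw <;> simp [qi]
      exact e _ rfl
  · refine ⟨1 - qi * u, ?_, ?_⟩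
    · intro h
      apply hui
      have h1 : (1 : ℍ[ℝ]) = qi * u := sub_eq_zero.mp h
      have h2 : qi * (qi * u) = qi * 1 := by rw [← h1]
      rw [← mul_assoc, qi_mul_qi, neg_one_mul, mul_one] at h2
      exact neg_eq_iff_eq_neg.mp h2
    · have e1 : (1 - qi * u) * u = u + qi := by
        rw [sub_mul, one_mul, mul_assoc, huu, mul_neg_one, sub_neg_eq_add]
      have e2 : qi * (1 - qi * u) = qi + u := by
        rw [mul_sub, mul_one, ← mul_assoc, qi_mul_qi, neg_one_mul, sub_neg_eq_add]
      rw [e1, e2, add_comm]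

lemma conj_to_qi {a : ℍ[ℝ]} (hre : a.re = 0) {r : ℝ} (hr : 0 < r)
    (hN : normSq a = r ^ 2) :
    ∃ q : ℍ[ℝ], normSq q = 1 ∧ q * a * star q = r • qi := by
  have hr0 : r ≠ 0 := ne_of_gt hr
  set u : ℍ[ℝ] := r⁻¹ • a with hu
  have hure : u.re = 0 := by simp [hu, hre]
  have hun : normSq u = 1 := by
    rw [hu, normSq_smul, hN]
    field_simp
  obtain ⟨s, hs0, hsu⟩ := exists_s hure hun
  have hNs : 0 < normSq s := lt_of_le_of_ne normSq_nonneg (Ne.symm (normSq_ne_zero.2 hs0))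
  set c : ℝ := (Real.sqrt (normSq s))⁻¹ with hc
  refine ⟨c • s, ?_, ?_⟩
  · rw [normSq_smul, hc]
    rw [inv_pow, Real.sq_sqrt hNs.le]
    field_simp
  · have ha : a = r • u := by rw [hu, smul_smul]; field_simp; rw [one_smul]
    have hsa : s * a = (r • qi) * s := by
      rw [ha, mul_smul_comm, hsu, smul_mul_assoc]
    have hss : s * star s = ((normSq s : ℝ) : ℍ[ℝ]) := self_mul_star s
    have key : s * a * star s = (normSq s * r) • qi := by
      rw [hsa, mul_assoc, hss, mul_coe_eq_smul, smul_smul]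
    have hcc : c * c = (normSq s)⁻¹ := by
      rw [hc, ← mul_inv, Real.mul_self_sqrt hNs.le]
    simp only [Quaternion.star_smul, smul_mul_assoc, mul_smul_comm, smul_smul]
    rw [key, smul_smul, hcc]
    congr 1
    field_simp

lemma standard {x : ℍ[ℝ] × ℍ[ℝ]} (hx : x ≠ 0) (hre : x.1.re = 0)
    (hxx : omul x x = 0) :
    ∃ (q rr : ℍ[ℝ]) (r : ℝ), normSq q = 1 ∧ normSq rr = 1 ∧ 0 < r ∧
      T q rr x = r • (qi, 1) := by
  have hN := null_normSq hre hxx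
  have ha0 : x.1 ≠ 0 := by
    intro h
    apply hx
    have h2 : normSq x.2 = 0 := by rw [← hN, h, map_zero]
    exact Prod.ext_iff.mpr ⟨h, normSq_eq_zero.mp h2⟩
  have hNa : 0 < normSq x.1 :=
    lt_of_le_of_ne normSq_nonneg (Ne.symm (normSq_ne_zero.2 ha0))
  set r := Real.sqrt (normSq x.1) with hrdef
  have hr : 0 < r := Real.sqrt_pos.2 hNa
  have hr2 : normSq x.1 = r ^ 2 := by rw [hrdef, Real.sq_sqrt hNa.le]
  obtain ⟨q, hq1, hq2⟩ := conj_to_qi hre hr hr2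
  refine ⟨q, r⁻¹ • (q * x.2), r, hq1, ?_, hr, ?_⟩
  · rw [normSq_smul, map_mul, hq1, one_mul, ← hN, hr2]
    field_simp
  · have e0 : q * x.2 * (star x.2 * star q) = q * (x.2 * star x.2) * star q := by
      rw [mul_assoc, ← mul_assoc x.2, ← mul_assoc]
    have e : q * x.2 * (star x.2 * star q) = (normSq x.2) • (1 : ℍ[ℝ]) := by
      rw [e0, self_mul_star, mul_coe_eq_smul, smul_mul_assoc, self_mul_star, hq1]
      norm_num
    have e2 : q * x.2 * star (r⁻¹ • (q * x.2)) = r • (1 : ℍ[ℝ]) := by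
      rw [Quaternion.star_smul, star_mul, mul_smul_comm, e, smul_smul, ← hN, hr2]
      congr 1
      field_simp
    rw [T_apply, hq2, e2]
    rfl

end OctAux

open OctAux

/-- The automorphism group of the split-octonions acts transitively on the spherization
of the null cone `K`. -/
theorem automorphisms_transitive_on_spherized_cone
    (x y : ℍ[ℝ] × ℍ[ℝ]) (hx : x ≠ 0) (hy : y ≠ 0)
    (hx_im : (x.1).re = 0) (hxx : omul x x = 0)
    (hy_im : (y.1).re = 0) (hyy : omul y y = 0) :
    ∃ (φ : (ℍ[ℝ] × ℍ[ℝ]) →ₗ[ℝ] (ℍ[ℝ] × ℍ[ℝ])), Function.Bijective φ ∧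
      (∀ u v : ℍ[ℝ] × ℍ[ℝ], φ (omul u v) = omul (φ u) (φ v)) ∧
      ∃ lam : ℝ, 0 < lam ∧ φ x = lam • y := by
  obtain ⟨qx, rrx, rx, hqx, hrrx, hrx, hTx⟩ := standard hx hx_im hxx
  obtain ⟨qy, rry, ry, hqy, hrry, hry, hTy⟩ := standard hy hy_im hyy
  have hqy' : normSq (star qy) = 1 := by rw [normSq_star]; exact hqy
  have hrry' : normSq (star rry) = 1 := by rw [normSq_star]; exact hrry
  refine ⟨(T (star qy) (star rry)).comp (T qx rrx), ?_, ?_, ?_⟩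
  · have := (T_bij hqy' hrry').comp (T_bij hqx hrrx)
    simpa [LinearMap.coe_comp] using this
  · intro u v
    simp only [LinearMap.comp_apply]
    rw [T_mul hqx hrrx, T_mul hqy' hrry']
  · refine ⟨rx / ry, div_pos hrx hry, ?_⟩
    have hyinv : T (star qy) (star rry) (ry • ((qi, 1) : ℍ[ℝ] × ℍ[ℝ])) = y := by
      rw [← hTy]; exact T_left_inv hqy hrry y
    have hbase : T (star qy) (star rry) ((qi, 1) : ℍ[ℝ] × ℍ[ℝ]) = ry⁻¹ • y := by
      rw [← hyinv, map_smul, smul_smul, inv_mul_cancel₀ (ne_of_gt hry), one_smul]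
    simp only [LinearMap.comp_apply]
    rw [hTx, map_smul, hbase, smul_smul]
    congr 1
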